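/- Let a ∈ ℝ and w ∈ ℂ. Then the following are equivalent: (i) for every τ > 0, every z ∈ ℂ with z + a − w·exp(−τ·z) = 0 satisfies Re(z) < 0; (ii) |w| ≤ a and Re(w) < a. (This characterizes the delay-independent stability region of equation (*).) -/

import Mathlib

open Complex

/-- `exp` is 1-Lipschitz on the closed left half-plane. -/
lemma exp_lip_aux {u v : ℂ} (hu : u.re ≤ 0) (hv : v.re ≤ 0) :
    ‖Complex.exp u - Complex.exp v‖ ≤ ‖u - v‖ := by
  have hconv : Convex ℝ {z : ℂ | z.re ≤ 0} := by
    refine convex_halfSpace_le ⟨fun x y => Complex.add_re x y, fun c x => by simp⟩ 0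
  have key := hconv.norm_image_sub_le_of_norm_hasFDerivWithin_le
    (f := Complex.exp)
    (f' := fun z => (ContinuousLinearMap.smulRight (1 : ℂ →L[ℂ] ℂ) (Complex.exp z)).restrictScalars ℝ)
    (fun z hz => ((Complex.hasDerivAt_exp z).hasFDerivAt.restrictScalars ℝ).hasFDerivWithinAt)
    (C := 1)
    (fun z hz => by
      rw [ContinuousLinearMap.norm_restrictScalars]
      have : ‖ContinuousLinearMap.smulRight (1 : ℂ →L[ℂ] ℂ) (Complex.exp z)‖ = ‖Complex.exp z‖ := by
        rw [ContinuousLinearMap.norm_smulRight_apply]; simp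
      rw [this]
      simpa [Complex.norm_exp] using Real.exp_le_one_iff.mpr hz)
    hv hu
  simpa using key

/-- If `|w| + a ≤ 0`, some small delay has a root in the closed right half-plane
(via the Banach fixed point theorem). -/
lemma contraction_case_aux (a : ℝ) (w : ℂ) (hwa : ‖w‖ + a ≤ 0)
    (H : ∀ τ : ℝ, 0 < τ → ∀ z : ℂ, z + (a : ℂ) - w * Complex.exp (-(τ : ℂ) * z) = 0 → z.re < 0) :
    False := by
  set τ : ℝ := 1 / (‖w‖ + 1) with hτdef
  have hwnn : (0:ℝ) ≤ ‖w‖ := norm_nonneg w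
  have hwpos : (0:ℝ) < ‖w‖ + 1 := by positivity
  have hτ : 0 < τ := by positivity
  set S : Set ℂ := {z | 0 ≤ z.re} with hSdef
  haveI : CompleteSpace S :=
    (isClosed_le continuous_const Complex.continuous_re).completeSpace_coe
  haveI : Nonempty S := ⟨⟨0, by simp [hSdef]⟩⟩
  have habse : ∀ z : ℂ, 0 ≤ z.re → ‖w * Complex.exp (-(τ:ℂ)*z)‖ ≤ ‖w‖ := by
    intro z hz
    rw [norm_mul, Complex.norm_exp]
    calc ‖w‖ * Real.exp ((-(τ:ℂ)*z).re) ≤ ‖w‖ * 1 := by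
          apply mul_le_mul_of_nonneg_left _ hwnn
          apply Real.exp_le_one_iff.mpr
          simp only [neg_re, neg_im, mul_re, ofReal_re, ofReal_im]
          nlinarith
      _ = ‖w‖ := mul_one _
  have hmap : ∀ z : ℂ, 0 ≤ z.re → ((-a : ℂ) + w * Complex.exp (-(τ:ℂ)*z)) ∈ S := by
    intro z hz
    simp only [hSdef, Set.mem_setOf_eq, add_re, neg_re, ofReal_re]
    have h1 := Complex.abs_re_le_norm (w * Complex.exp (-(τ:ℂ)*z))
    have h2 := habse z hz
    have := abs_le.mp h1
    linarith [this.1]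
  let g : S → S := fun z => ⟨(-a:ℂ) + w * Complex.exp (-(τ:ℂ)*(z:ℂ)), hmap z z.2⟩
  have hKnn : (0:ℝ) ≤ τ * ‖w‖ := by positivity
  have hcontr : ContractingWith ⟨τ * ‖w‖, hKnn⟩ g := by
    constructor
    · apply NNReal.coe_lt_coe.mp
      show τ * ‖w‖ < (1:ℝ)
      rw [hτdef]
      rw [div_mul_eq_mul_div, one_mul, div_lt_one hwpos]
      linarith
    · apply LipschitzWith.of_dist_le_mul
      rintro ⟨x, hx⟩ ⟨y, hy⟩
      simp only [hSdef, Set.mem_setOf_eq] at hx hy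
      show dist ((-a:ℂ) + w * Complex.exp (-(τ:ℂ)*x)) ((-a:ℂ) + w * Complex.exp (-(τ:ℂ)*y))
        ≤ (τ * ‖w‖) * dist x y
      rw [Complex.dist_eq, Complex.dist_eq]
      have : (-a:ℂ) + w * Complex.exp (-(τ:ℂ)*x) - ((-a:ℂ) + w * Complex.exp (-(τ:ℂ)*y))
          = w * (Complex.exp (-(τ:ℂ)*x) - Complex.exp (-(τ:ℂ)*y)) := by ring
      rw [this, norm_mul]
      have hlip := exp_lip_aux (u := -(τ:ℂ)*x) (v := -(τ:ℂ)*y)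
        (by simp only [neg_re, neg_im, mul_re, ofReal_re, ofReal_im]; nlinarith)
        (by simp only [neg_re, neg_im, mul_re, ofReal_re, ofReal_im]; nlinarith)
      have : ‖-(τ:ℂ)*x - -(τ:ℂ)*y‖ = τ * ‖x - y‖ := by
        have : -(τ:ℂ)*x - -(τ:ℂ)*y = (τ:ℂ) * (y - x) := by ring
        rw [this, norm_mul, Complex.norm_real, Real.norm_eq_abs, abs_of_pos hτ, ← norm_neg]
        ring_nf
      calc ‖w‖ * ‖Complex.exp (-(τ:ℂ)*x) - Complex.exp (-(τ:ℂ)*y)‖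
          ≤ ‖w‖ * ‖-(τ:ℂ)*x - -(τ:ℂ)*y‖ :=
            mul_le_mul_of_nonneg_left hlip hwnn
        _ = (τ * ‖w‖) * ‖x - y‖ := by rw [this]; ring
  have hfix := hcontr.fixedPoint_isFixedPt
  set z₀ : S := hcontr.fixedPoint g with hz₀
  have heq : (-a:ℂ) + w * Complex.exp (-(τ:ℂ)*(z₀:ℂ)) = (z₀:ℂ) := by
    have := congrArg (Subtype.val) hfix
    exact this
  have hroot : (z₀:ℂ) + (a : ℂ) - w * Complex.exp (-(τ : ℂ) * (z₀:ℂ)) = 0 := by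
    linear_combination -heq
  have := H τ hτ (z₀:ℂ) hroot
  have h2 : (0:ℝ) ≤ (z₀:ℂ).re := z₀.2
  linarith

/-- If `|a| < |w|`, some delay has a purely imaginary root. -/
lemma imag_root_case_aux (a : ℝ) (w : ℂ) (hwa : |a| < ‖w‖)
    (H : ∀ τ : ℝ, 0 < τ → ∀ z : ℂ, z + (a : ℂ) - w * Complex.exp (-(τ : ℂ) * z) = 0 → z.re < 0) :
    False := by
  have hsq : a^2 < ‖w‖ ^ 2 := by
    nlinarith [_root_.sq_abs a, abs_nonneg a, norm_nonneg w]
  set y : ℝ := Real.sqrt (‖w‖ ^ 2 - a ^ 2) with hydef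
  have hy2 : y^2 = ‖w‖ ^2 - a^2 := Real.sq_sqrt (by linarith)
  have hypos : 0 < y := Real.sqrt_pos.mpr (by linarith)
  set u : ℂ := (a:ℂ) + (y:ℂ) * Complex.I with hudef
  have hu : ‖u‖ = ‖w‖ := by
    have h1 : (‖u‖)^2 = (‖w‖)^2 := by
      rw [Complex.sq_norm, Complex.normSq_apply]
      simp [hudef]
      nlinarith [hy2]
    have := congrArg Real.sqrt h1
    rwa [Real.sqrt_sq (norm_nonneg _), Real.sqrt_sq (norm_nonneg _)] at this
  set τ : ℝ := (Complex.arg w - Complex.arg u + 2*Real.pi)/y with hτdef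
  have hτpos : 0 < τ := by
    apply div_pos _ hypos
    have h1 := Complex.neg_pi_lt_arg w
    have h2 := Complex.arg_le_pi u
    linarith
  have hτy : τ * y = Complex.arg w - Complex.arg u + 2*Real.pi := by
    rw [hτdef]; field_simp
  have hexp : w * Complex.exp (-(τ:ℂ) * ((y:ℂ)*Complex.I)) = u := by
    conv_lhs => rw [← Complex.norm_mul_exp_arg_mul_I w]
    have h1 : -(τ:ℂ) * ((y:ℂ)*Complex.I) = ((-(τ*y) : ℝ) : ℂ) * Complex.I := by push_cast; ring
    rw [h1, mul_assoc, ← Complex.exp_add]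
    have h2 : (Complex.arg w : ℂ) * Complex.I + ((-(τ*y):ℝ):ℂ) * Complex.I
        = (Complex.arg u : ℂ) * Complex.I + (-1 : ℤ) * (2*(Real.pi:ℂ)*Complex.I) := by
      rw [hτy]; push_cast; ring
    rw [h2, Complex.exp_add, Complex.exp_int_mul_two_pi_mul_I, mul_one, ← hu,
      Complex.norm_mul_exp_arg_mul_I u]
  have hroot : (y:ℂ)*Complex.I + (a : ℂ) - w * Complex.exp (-(τ : ℂ) * ((y:ℂ)*Complex.I)) = 0 := by
    rw [hexp, hudef]; ring
  have := H τ hτpos ((y:ℂ)*Complex.I) hroot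
  simp at this

/-- Delay-independent stability region of `z + a - w * exp (-τ z) = 0`:
all roots have negative real parts for every delay `τ > 0` iff `|w| ≤ a` and `Re w < a`. -/
theorem delay_independent_stability (a : ℝ) (w : ℂ) :
    (∀ τ : ℝ, 0 < τ → ∀ z : ℂ, z + (a : ℂ) - w * Complex.exp (-(τ : ℂ) * z) = 0 → z.re < 0) ↔
      (‖w‖ ≤ a ∧ w.re < a) := by
  constructor
  · intro H
    have h1 : ‖w‖ ≤ a := by
      by_contra h
      push_neg at h
      rcases le_or_gt (‖w‖) |a| with hle | hlt
      · have ha : a < 0 := by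
          rcases abs_cases a with ⟨h1, h2⟩ | ⟨h1, h2⟩
          · linarith
          · rcases lt_or_ge a 0 with h' | h'
            · exact h'
            · rw [_root_.abs_of_nonneg h'] at hle; linarith
        have : ‖w‖ + a ≤ 0 := by
          rw [abs_of_neg ha] at hle; linarith
        exact absurd (contraction_case_aux a w this H) not_false
      · exact absurd (imag_root_case_aux a w hlt H) not_false
    refine ⟨h1, ?_⟩
    by_contra h
    push_neg at h
    have hre : w.re ≤ ‖w‖ := by
      have := Complex.abs_re_le_norm w
      exact le_trans (le_abs_self _) this
    have heq1 : w.re = a := le_antisymm (le_trans hre h1) h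
    have heq2 : ‖w‖ = a := le_antisymm h1 (by rw [← heq1]; exact hre)
    have him : w.im = 0 := by
      have := Complex.sq_norm w
      rw [heq2, Complex.normSq_apply, ← heq1] at this
      nlinarith
    have hw : w = (a : ℂ) := Complex.ext (by simp [heq1]) (by simp [him])
    have hroot : (0:ℂ) + (a : ℂ) - w * Complex.exp (-(1:ℝ) * (0:ℂ)) = 0 := by
      rw [hw]; simp
    have := H 1 one_pos 0 (by simpa using hroot)
    simp at this
  · rintro ⟨h1, h2⟩ τ hτ z hz
    by_contra hre
    push_neg at hre
    have ha : 0 ≤ a := le_trans (norm_nonneg w) h1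
    have heq : z + (a:ℂ) = w * Complex.exp (-(τ:ℂ) * z) := by linear_combination hz
    have habs : ‖z + (a:ℂ)‖ = ‖w‖ * Real.exp (-(τ * z.re)) := by
      rw [heq, norm_mul, Complex.norm_exp]
      norm_num
    have hle : ‖z + (a:ℂ)‖ ≤ a := by
      rw [habs]
      calc ‖w‖ * Real.exp (-(τ * z.re)) ≤ a * 1 := by
            apply mul_le_mul h1 _ (Real.exp_nonneg _) ha
            exact Real.exp_le_one_iff.mpr (by nlinarith)
        _ = a := mul_one a
    have hsq : (z.re + a)^2 + z.im^2 ≤ a^2 := by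
      have := pow_le_pow_left₀ (norm_nonneg _) hle 2
      rw [Complex.sq_norm, Complex.normSq_apply] at this
      simp at this
      nlinarith [this]
    have hz0 : z.re = 0 ∧ z.im = 0 := by constructor <;> nlinarith
    have : z = 0 := Complex.ext hz0.1 hz0.2
    subst this
    simp at hz
    have := congrArg Complex.re hz
    simp at this
    linarith
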